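/- Let v₊ < 0 < v₋, σ₊, σ₋ > 0, α₊₋, α₋₊ ∈ [0,1). The system of three equations −v₊γ₊ = σ₊ + (v₋−β)γ₋α₋₊, v₋γ₋ = σ₋ − (v₊−β)γ₊α₊₋, (v₋−β)γ₋ = −(v₊−β)γ₊, with unknowns γ₊, γ₋ ≥ 0 and β ∈ (v₊, v₋), has exactly one solution. -/

import Mathlib

open Set

/-- A quadratic with nonnegative leading coefficient and negative constant term
has at most one positive root. -/
lemma quad_pos_root_unique (A B C w1 w2 : ℝ) (hA : 0 ≤ A) (hC : C < 0)
    (h1 : 0 < w1) (h2 : 0 < w2)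
    (q1 : A*w1^2 + B*w1 + C = 0) (q2 : A*w2^2 + B*w2 + C = 0) : w1 = w2 := by
  have hAB1 : 0 < A*w1 + B := by nlinarith
  have hpos : 0 < A*(w1+w2) + B := by nlinarith [mul_nonneg hA h2.le]
  have key : (w1 - w2)*(A*(w1+w2) + B) = 0 := by linear_combination q1 - q2
  rcases mul_eq_zero.1 key with h | h
  · linarith
  · linarith

set_option maxHeartbeats 1000000 in
/-- The system characterising the stationary point with finite mass of the one-market
model with recycling has exactly one solution `(γ₊, γ₋, β)` with `γ₊, γ₋ ≥ 0` and
`β ∈ (v₊, v₋)`. -/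
theorem stationary_point_system_unique_solution
    (vp vm σp σm apm amp : ℝ)
    (hvp : vp < 0) (hvm : 0 < vm) (hσp : 0 < σp) (hσm : 0 < σm)
    (hapm : apm ∈ Ico (0:ℝ) 1) (hamp : amp ∈ Ico (0:ℝ) 1) :
    ∃! x : ℝ × ℝ × ℝ,
      0 ≤ x.1 ∧ 0 ≤ x.2.1 ∧ x.2.2 ∈ Ioo vp vm ∧
      -vp * x.1 = σp + (vm - x.2.2) * x.2.1 * amp ∧
      vm * x.2.1 = σm - (vp - x.2.2) * x.1 * apm ∧
      (vm - x.2.2) * x.2.1 = -(vp - x.2.2) * x.1 := by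
  obtain ⟨hapm0, hapm1⟩ := hapm
  obtain ⟨hamp0, hamp1⟩ := hamp
  have hvpm : vp < vm := hvp.trans hvm
  have hvp' : (0:ℝ) < -vp := by linarith
  set A : ℝ := -vp*apm + vm*amp - (vm-vp)*amp*apm with hA
  set B : ℝ := -vp*σm + vm*σp - (vm-vp)*(σp*apm + σm*amp) with hB
  set C : ℝ := -((vm-vp)*σp*σm) with hC
  have hCneg : C < 0 := by
    rw [hC]
    nlinarith [mul_pos (mul_pos (by linarith : (0:ℝ) < vm - vp) hσp) hσm]
  have hA0 : 0 ≤ A := by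
    have t1 : (0:ℝ) ≤ (-vp)*apm*(1-amp) :=
      mul_nonneg (mul_nonneg hvp'.le hapm0) (by linarith)
    have t2 : (0:ℝ) ≤ vm*amp*(1-apm) :=
      mul_nonneg (mul_nonneg hvm.le hamp0) (by linarith)
    rw [hA]; nlinarith
  -- characterization of any solution
  have char : ∀ g1 g2 b : ℝ, 0 ≤ g1 → 0 ≤ g2 → b ∈ Ioo vp vm →
      -vp * g1 = σp + (vm - b) * g2 * amp →
      vm * g2 = σm - (vp - b) * g1 * apm →
      (vm - b) * g2 = -(vp - b) * g1 →
      ∃ w : ℝ, 0 < w ∧ A*w^2 + B*w + C = 0 ∧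
        g1 = (σp + amp*w)/(-vp) ∧ g2 = (σm + apm*w)/vm ∧
        b = vp + w*(-vp)/(σp + amp*w) := by
    intro g1 g2 b hg1 hg2 hb e1 e2 e3
    have hg1pos : 0 < g1 := by
      rcases hg1.lt_or_eq with h | h
      · exact h
      exfalso
      rw [← h] at e1 e3
      have h3 : (vm - b)*g2 = 0 := by linarith [e3]
      nlinarith [e1, h3]
    set w : ℝ := (b - vp)*g1 with hw
    have hwpos : 0 < w := mul_pos (by linarith [hb.1]) hg1pos
    have hw2 : (vm - b)*g2 = w := by rw [hw]; linear_combination e3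
    have hP : σp + amp*w = -vp*g1 := by linear_combination -e1 - amp*hw2
    have hQ : σm + apm*w = vm*g2 := by linear_combination -e2 + apm*hw
    have hquad : A*w^2 + B*w + C = 0 := by
      rw [hA, hB, hC]
      linear_combination (vm*w - (vm-vp)*(σm+apm*w)) * hP
        + (-vp*w + vp*(vm-vp)*g1) * hQ + (-vp*vm*g2) * hw + (vp*vm*g1) * hw2
    refine ⟨w, hwpos, hquad, ?_, ?_, ?_⟩
    · rw [hP]; field_simp [hvp.ne]
    · rw [hQ]; field_simp [hvm.ne']
    · rw [hP]
      field_simp [hvp.ne, hg1pos.ne']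
      linear_combination (-vp)*hw
  -- existence of a positive root of the quadratic
  have hroot : ∃ w : ℝ, 0 < w ∧ A*w^2 + B*w + C = 0 := by
    rcases hA0.lt_or_eq with hApos | hAz
    · -- A > 0 : IVT
      obtain ⟨M, hM1, hgM⟩ : ∃ M : ℝ, 1 ≤ M ∧ 0 ≤ A*M^2 + B*M + C := by
        refine ⟨(|B| + |C| + A)/A, ?_, ?_⟩
        · rw [le_div_iff₀ hApos]; nlinarith [abs_nonneg B, abs_nonneg C]
        · have hAM : A*((|B| + |C| + A)/A) = |B| + |C| + A := by
            field_simp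
          set M : ℝ := (|B| + |C| + A)/A with hMdef
          have hM1 : 1 ≤ M := by rw [hMdef, le_div_iff₀ hApos]; nlinarith [abs_nonneg B, abs_nonneg C]
          nlinarith [neg_abs_le B, neg_abs_le C, le_abs_self B, le_abs_self C,
            mul_nonneg (sub_nonneg.2 hM1) (abs_nonneg C),
            mul_nonneg (sub_nonneg.2 hM1) hApos.le,
            mul_nonneg (by linarith [neg_abs_le B] : (0:ℝ) ≤ |B| + B) (by linarith : (0:ℝ) ≤ M)]
      have h0M : (0:ℝ) ≤ M := by linarith
      have hcont : ContinuousOn (fun w : ℝ => A*w^2 + B*w + C) (Icc 0 M) :=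
        (Continuous.continuousOn (by fun_prop))
      have hsub := intermediate_value_Icc h0M hcont
      have hmem : (0:ℝ) ∈ Icc (A*(0:ℝ)^2 + B*0 + C) (A*M^2 + B*M + C) := by
        exact ⟨by nlinarith, by nlinarith⟩
      obtain ⟨w, hwmem, hweq⟩ := hsub hmem
      refine ⟨w, ?_, hweq⟩
      rcases hwmem.1.lt_or_eq with h | h
      · exact h
      · exfalso; rw [← h] at hweq; simp at hweq; nlinarith
    · -- A = 0 : then amp = apm = 0 and B > 0
      have hampz : amp = 0 := by
        have t1 : (0:ℝ) ≤ (-vp)*apm*(1-amp) :=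
          mul_nonneg (mul_nonneg hvp'.le hapm0) (by linarith)
        refine le_antisymm ?_ hamp0
        nlinarith [hAz, hA, t1, mul_pos hvm (show (0:ℝ) < 1 - apm by linarith)]
      have hapmz : apm = 0 := by
        have t2 : (0:ℝ) ≤ vm*amp*(1-apm) :=
          mul_nonneg (mul_nonneg hvm.le hamp0) (by linarith)
        refine le_antisymm ?_ hapm0
        nlinarith [hAz, hA, t2, mul_pos hvp' (show (0:ℝ) < 1 - amp by linarith)]
      have hBpos : 0 < B := by rw [hB, hampz, hapmz]; nlinarith
      refine ⟨-C/B, div_pos (by linarith) hBpos, ?_⟩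
      rw [← hAz]
      field_simp
      ring
  obtain ⟨w, hwpos, hwq⟩ := hroot
  have hPpos : 0 < σp + amp*w := by nlinarith [mul_nonneg hamp0 hwpos.le]
  have hQpos : 0 < σm + apm*w := by nlinarith [mul_nonneg hapm0 hwpos.le]
  set g1 : ℝ := (σp + amp*w)/(-vp) with hg1def
  set g2 : ℝ := (σm + apm*w)/vm with hg2def
  set b : ℝ := vp + w*(-vp)/(σp + amp*w) with hbdef
  clear_value g1 g2 b
  have hg1pos : 0 < g1 := by rw [hg1def]; exact div_pos hPpos hvp'
  have hg2pos : 0 < g2 := by rw [hg2def]; exact div_pos hQpos hvm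
  have hb1 : vp < b := by
    rw [hbdef]
    nlinarith [div_pos (mul_pos hwpos hvp') hPpos]
  have hk2 : (b - vp)*g1 = w := by
    rw [hbdef, hg1def]; field_simp; rw [mul_div_cancel_left₀ _ hvp.ne]; ring
  have hk3 : (vm - b)*g2 = w := by
    rw [hbdef, hg2def]
    rw [hA, hB, hC] at hwq
    field_simp
    linear_combination -hwq
  have hb2 : b < vm := by
    nlinarith [hk3, hwpos, hg2pos]
  refine ⟨(g1, g2, b), ⟨hg1pos.le, hg2pos.le, ⟨hb1, hb2⟩, ?_, ?_, ?_⟩, ?_⟩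
  · show -vp * g1 = σp + (vm - b) * g2 * amp
    rw [hk3, hg1def]; field_simp [hvp.ne]
  · show vm * g2 = σm - (vp - b) * g1 * apm
    have : (vp - b) * g1 = -w := by linear_combination -hk2
    rw [this, hg2def]; field_simp [hvm.ne']; ring
  · show (vm - b) * g2 = -(vp - b) * g1
    rw [hk3]; linear_combination -hk2
  · rintro ⟨y1, y2, yb⟩ ⟨h1, h2, hbmem, e1, e2, e3⟩
    obtain ⟨w', hw'pos, hw'q, hy1, hy2, hyb⟩ := char y1 y2 yb h1 h2 hbmem e1 e2 e3
    have hww : w' = w := quad_pos_root_unique A B C w' w hA0 hCneg hw'pos hwpos hw'q hwq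
    rw [hww] at hy1 hy2 hyb
    simp only [Prod.mk.injEq]
    rw [hg1def, hg2def, hbdef]
    exact ⟨hy1, hy2, hyb⟩
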